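/- Let X be a topological space, G ⊆ X a functionally open set (i.e., G = φ⁻¹((0,1]) for some continuous φ : X → [0,1]), Y a contractible topological space with contraction to a point y₀, and g : G → Y the pointwise limit of a sequence of continuous maps G → Y. Then the map f : X → Y defined by f(x) = g(x) for x ∈ G and f(x) = y₀ for x ∉ G is the pointwise limit of a sequence of continuous maps X → Y. -/

import Mathlib

open Set Filter Topology unitInterval Classical

theorem stmt7 {X Y : Type*} [TopologicalSpace X] [TopologicalSpace Y]
    (φ : X → I) (hφ : Continuous φ) (G : Set X) (hG : G = φ ⁻¹' {t : I | 0 < (t : ℝ)})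
    (y₀ : Y) (γ : Y × I → Y) (hγ : Continuous γ)
    (hγ0 : ∀ y, γ (y, 0) = y) (hγ1 : ∀ y, γ (y, 1) = y₀)
    (g : G → Y)
    (hg : ∃ gn : ℕ → G → Y, (∀ n, Continuous (gn n)) ∧
      ∀ x : G, Tendsto (fun n => gn n x) atTop (nhds (g x)))
    (f : X → Y) (hf : ∀ x, f x = if h : x ∈ G then g ⟨x, h⟩ else y₀) :
    ∃ fn : ℕ → X → Y, (∀ n, Continuous (fn n)) ∧
      ∀ x, Tendsto (fun n => fn n x) atTop (nhds (f x)) := by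
  obtain ⟨gn, hgn, hgt⟩ := hg
  -- the cutoff
  set cut : ℕ → X → I := fun n x =>
    Set.projIcc (0:ℝ) 1 zero_le_one (2 - 2*(n+1)*(φ x : ℝ)) with hcut
  have hcutc : ∀ n, Continuous (cut n) := by
    intro n
    exact continuous_projIcc.comp (by
      have : Continuous fun x => (φ x : ℝ) := continuous_subtype_val.comp hφ
      fun_prop)
  have hGopen : IsOpen G := by
    rw [hG]
    exact (isOpen_Ioi.preimage continuous_subtype_val).preimage hφ
  refine ⟨fun n x => if h : x ∈ G then γ (gn n ⟨x, h⟩, cut n x) else y₀, ?_, ?_⟩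
  · intro n
    rw [continuous_iff_continuousAt]
    intro x₀
    by_cases hx₀ : x₀ ∈ G
    · -- continuity on the open set G
      have hcont : ContinuousOn (fun x => if h : x ∈ G then γ (gn n ⟨x, h⟩, cut n x) else y₀) G := by
        rw [continuousOn_iff_continuous_restrict]
        have : G.domRestrict (fun x => if h : x ∈ G then γ (gn n ⟨x, h⟩, cut n x) else y₀)
            = fun p : G => γ (gn n p, cut n p) := by
          funext p
          simp [Set.domRestrict, p.2]
        rw [this]
        exact hγ.comp ((hgn n).prodMk ((hcutc n).comp continuous_subtype_val))
      exact hcont.continuousAt (hGopen.mem_nhds hx₀)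
    · -- near x₀ the function is constantly y₀
      have hφ0 : (φ x₀ : ℝ) = 0 := by
        by_contra h
        exact hx₀ (hG ▸ (show (0:ℝ) < φ x₀ from lt_of_le_of_ne (φ x₀).2.1 (Ne.symm h)))
      have hU : IsOpen {x | (φ x : ℝ) < 1/(2*(n+1))} :=
        isOpen_lt (continuous_subtype_val.comp hφ) continuous_const
      have hmem : x₀ ∈ {x | (φ x : ℝ) < 1/(2*(n+1))} := by
        simp only [Set.mem_setOf_eq, hφ0]
        positivity
      have heq : ∀ x ∈ {x | (φ x : ℝ) < 1/(2*(n+1))},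
          (if h : x ∈ G then γ (gn n ⟨x, h⟩, cut n x) else y₀) = y₀ := by
        intro x hx
        by_cases h : x ∈ G
        · rw [dif_pos h]
          have h1 : (1:ℝ) ≤ 2 - 2*(n+1)*(φ x : ℝ) := by
            have : (φ x : ℝ) < 1/(2*(n+1)) := hx
            have h2 : (0:ℝ) < 2*((n:ℝ)+1) := by positivity
            have h3 : (φ x : ℝ) * (2*((n:ℝ)+1)) < 1 := (lt_div_iff₀ h2).mp this
            nlinarith
          have : cut n x = 1 := by
            rw [hcut]
            simp only
            rw [Set.projIcc_of_right_le _ h1]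
            rfl
          rw [this, hγ1]
        · rw [dif_neg h]
      have : (fun x => if h : x ∈ G then γ (gn n ⟨x, h⟩, cut n x) else y₀) =ᶠ[𝓝 x₀]
          (fun _ => y₀) := by
        filter_upwards [hU.mem_nhds hmem] with x hx using heq x hx
      exact (continuousAt_const).congr this.symm
  · intro x
    by_cases hx : x ∈ G
    · -- eventually cut n x = 0 and fn n x = gn n x
      have hc : (0:ℝ) < φ x := by rw [hG] at hx; exact hx
      have hevent : ∀ᶠ n in atTop, (if h : x ∈ G then γ (gn n ⟨x, h⟩, cut n x) else y₀)
          = gn n ⟨x, hx⟩ := by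
        filter_upwards [eventually_ge_atTop ⌈1/(φ x : ℝ)⌉₊] with n hn
        rw [dif_pos hx]
        have h1 : 1/(φ x : ℝ) ≤ n := le_trans (Nat.le_ceil _) (Nat.cast_le.mpr hn)
        have h2 : 2 - 2*(n+1)*(φ x : ℝ) ≤ 0 := by
          have : 1 ≤ (n:ℝ) * (φ x : ℝ) := by
            rw [div_le_iff₀ hc] at h1; linarith
          nlinarith
        have : cut n x = 0 := by
          rw [hcut]
          simp only
          rw [Set.projIcc_of_le_left _ h2]
          rfl
        rw [this, hγ0]
      have hfx : f x = g ⟨x, hx⟩ := by rw [hf, dif_pos hx]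
      rw [hfx]
      exact (hgt ⟨x, hx⟩).congr' (hevent.mono fun n h => h.symm)
    · have hfx : f x = y₀ := by rw [hf, dif_neg hx]
      rw [hfx]
      simp only [dif_neg hx]
      exact tendsto_const_nhds
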